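/- Time-uniform Hoeffding bound via doubling: Let M_t be independent random variables in [0,1] with common mean μ. Then with probability at least 1-δ, for all 1 ≤ t ≤ T, |μ̂_t - μ| ≤ sqrt(log(2⌈log₂ T⌉/δ)/t), where μ̂_t is the sample mean. -/

import Mathlib

open MeasureTheory ProbabilityTheory Finset Real
open scoped ENNReal NNReal

private lemma stmt9_hoeff_scalar {p : ℝ} (hp0 : 0 ≤ p) (hp1 : p ≤ 1) (l : ℝ) :
    (1 - p) + p * exp l ≤ exp (l * p + l ^ 2 / 8) := by
  set D : ℝ → ℝ := fun x => 1 - p + p * exp x with hDdef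
  have hD : ∀ x, 0 < D x := by
    intro x
    show 0 < 1 - p + p * exp x
    rcases le_total (exp x) 1 with h | h
    · nlinarith [exp_pos x]
    · nlinarith [exp_pos x]
  have hDder : ∀ x, HasDerivAt D (p * exp x) x := fun x =>
    ((Real.hasDerivAt_exp x).const_mul p).const_add (1 - p)
  set g : ℝ → ℝ := fun x => x * p + x ^ 2 / 8 - Real.log (D x) with hgdef
  set g' : ℝ → ℝ := fun x => p + x / 4 - p * exp x / D x with hg'def
  have hgder : ∀ x, HasDerivAt g (g' x) x := by
    intro x
    have h1 : HasDerivAt (fun x : ℝ => x * p + x ^ 2 / 8) (p + x / 4) x := by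
      have := ((hasDerivAt_id x).mul_const p).add ((hasDerivAt_pow 2 x).div_const 8)
      refine this.congr_deriv ?_
      simp; ring
    have h2 : HasDerivAt (fun x => Real.log (D x)) (p * exp x / D x) x :=
      (hDder x).log (hD x).ne'
    exact h1.sub h2
  have hg'der : ∀ x, HasDerivAt g'
      (1/4 - (p * exp x * D x - p * exp x * (p * exp x)) / (D x) ^ 2) x := by
    intro x
    have h1 : HasDerivAt (fun x : ℝ => p + x / 4) (1/4) x := by
      simpa using ((hasDerivAt_id x).div_const 4).const_add p
    have h2 : HasDerivAt (fun x => p * exp x / D x)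
        ((p * exp x * D x - p * exp x * (p * exp x)) / (D x) ^ 2) x :=
      ((Real.hasDerivAt_exp x).const_mul p).div (hDder x) (hD x).ne'
    exact h1.sub h2
  have hg''nonneg : ∀ x, 0 ≤ 1/4 - (p * exp x * D x - p * exp x * (p * exp x)) / (D x) ^ 2 := by
    intro x
    rw [sub_nonneg, div_le_iff₀ (pow_pos (hD x) 2)]
    have hDx : D x = 1 - p + p * exp x := rfl
    nlinarith [sq_nonneg ((1 - p) - p * exp x), exp_pos x]
  have hg'mono : Monotone g' :=
    monotone_of_deriv_nonneg (fun x => (hg'der x).differentiableAt)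
      (fun x => by rw [(hg'der x).deriv]; exact hg''nonneg x)
  have hg'0 : g' 0 = 0 := by
    simp only [hg'def, hDdef]
    simp [exp_zero]
  have hg0 : g 0 = 0 := by
    simp only [hgdef, hDdef]
    simp [exp_zero]
  have hgdiff : Differentiable ℝ g := fun x => (hgder x).differentiableAt
  have hgnonneg : ∀ x, 0 ≤ g x := by
    intro x
    rcases le_total 0 x with hx | hx
    · have hmono : MonotoneOn g (Set.Ici (0:ℝ)) := by
        refine monotoneOn_of_deriv_nonneg (convex_Ici 0) hgdiff.continuous.continuousOn
          (hgdiff.differentiableOn) ?_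
        intro y hy
        rw [interior_Ici] at hy
        rw [(hgder y).deriv]
        calc (0:ℝ) = g' 0 := hg'0.symm
        _ ≤ g' y := hg'mono (le_of_lt hy)
      calc (0:ℝ) = g 0 := hg0.symm
      _ ≤ g x := hmono Set.self_mem_Ici hx hx
    · have hanti : AntitoneOn g (Set.Iic (0:ℝ)) := by
        refine antitoneOn_of_deriv_nonpos (convex_Iic 0) hgdiff.continuous.continuousOn
          (hgdiff.differentiableOn) ?_
        intro y hy
        rw [interior_Iic] at hy
        rw [(hgder y).deriv]
        calc g' y ≤ g' 0 := hg'mono (le_of_lt hy)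
        _ = 0 := hg'0
      calc (0:ℝ) = g 0 := hg0.symm
      _ ≤ g x := hanti hx Set.self_mem_Iic hx
  have hlog : Real.log (D l) ≤ l * p + l ^ 2 / 8 := by
    have := hgnonneg l
    simp only [hgdef] at this
    linarith
  calc (1 - p) + p * exp l = Real.exp (Real.log (D l)) := (Real.exp_log (hD l)).symm
  _ ≤ exp (l * p + l ^ 2 / 8) := Real.exp_le_exp.mpr hlog

private lemma stmt9_exp_int {Ω : Type*} {m : MeasurableSpace Ω} (P : Measure Ω)
    [IsProbabilityMeasure P] {X : Ω → ℝ} (hX : Measurable X)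
    (hb : ∀ᵐ ω ∂P, X ω ∈ Set.Icc (0:ℝ) 1) (l : ℝ) :
    Integrable (fun ω => exp (l * X ω)) P := by
  refine Integrable.mono' (integrable_const (exp |l|)) ((hX.const_mul l).exp).aestronglyMeasurable ?_
  filter_upwards [hb] with ω h
  rw [norm_eq_abs, abs_of_pos (exp_pos _), Real.exp_le_exp]
  calc l * X ω ≤ |l * X ω| := le_abs_self _
  _ = |l| * |X ω| := abs_mul _ _
  _ ≤ |l| * 1 := by
      refine mul_le_mul_of_nonneg_left ?_ (abs_nonneg l)
      rw [abs_le]; exact ⟨by linarith [h.1], h.2⟩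
  _ = |l| := mul_one _

private lemma stmt9_mgf_le {Ω : Type*} {m : MeasurableSpace Ω} (P : Measure Ω)
    [IsProbabilityMeasure P] {X : Ω → ℝ} (hX : Measurable X)
    (hb : ∀ᵐ ω ∂P, X ω ∈ Set.Icc (0:ℝ) 1) {μ : ℝ} (hμ : ∫ ω, X ω ∂P = μ) (l : ℝ) :
    ∫ ω, exp (l * X ω) ∂P ≤ exp (l * μ + l ^ 2 / 8) := by
  have hXint : Integrable X P := by
    refine Integrable.mono' (integrable_const 1) hX.aestronglyMeasurable ?_
    filter_upwards [hb] with ω h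
    rw [norm_eq_abs, abs_le]; exact ⟨by linarith [h.1], h.2⟩
  have hp0 : 0 ≤ μ := by
    rw [← hμ]; exact integral_nonneg_of_ae (by filter_upwards [hb] with ω h using h.1)
  have hp1 : μ ≤ 1 := by
    rw [← hμ]
    calc ∫ ω, X ω ∂P ≤ ∫ _, (1:ℝ) ∂P :=
      integral_mono_ae hXint (integrable_const 1) (by filter_upwards [hb] with ω h using h.2)
    _ = 1 := by simp
  have hpt : ∀ᵐ ω ∂P, exp (l * X ω) ≤ (1 - X ω) + X ω * exp l := by
    filter_upwards [hb] with ω h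
    have := convexOn_exp.2 (Set.mem_univ (0:ℝ)) (Set.mem_univ l)
      (by linarith [h.2] : (0:ℝ) ≤ 1 - X ω) h.1 (by ring)
    simpa [smul_eq_mul, mul_comm] using this
  have hrhsint : Integrable (fun ω => (1 - X ω) + X ω * exp l) P :=
    ((integrable_const 1).sub hXint).add (hXint.mul_const _)
  calc ∫ ω, exp (l * X ω) ∂P ≤ ∫ ω, ((1 - X ω) + X ω * exp l) ∂P :=
        integral_mono_ae (stmt9_exp_int P hX hb l) hrhsint hpt
  _ = (1 - μ) + μ * exp l := by
      have h1 := integral_add ((integrable_const (1:ℝ)).sub hXint) (hXint.mul_const (rexp l))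
      simp only [Pi.sub_apply] at h1
      rw [h1, integral_mul_const, hμ, integral_sub (integrable_const 1) hXint,
        integral_const, hμ]
      simp
  _ ≤ exp (l * μ + l ^ 2 / 8) := stmt9_hoeff_scalar hp0 hp1 l

set_option maxHeartbeats 1000000 in
private lemma stmt9_maximal {Ω : Type*} {m : MeasurableSpace Ω} (P : Measure Ω)
    [IsProbabilityMeasure P]
    (M : ℕ → Ω → ℝ) (hmeas : ∀ t, Measurable (M t))
    (hindep : iIndepFun M P)
    (hbdd : ∀ t, ∀ᵐ ω ∂P, M t ω ∈ Set.Icc (0:ℝ) 1)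
    (μ : ℝ) (hmean : ∀ t, ∫ ω, M t ω ∂P = μ)
    (n : ℕ) (hn : 1 ≤ n) (ε : ℝ) (hε : 0 < ε) :
    P {ω | ∃ t ∈ Finset.Icc 1 n, ε ≤ (∑ τ ∈ Finset.Icc 1 t, M τ ω) - t * μ}
      ≤ ENNReal.ofReal (Real.exp (-2 * ε ^ 2 / n)) := by
  have hnR : (0:ℝ) < n := by exact_mod_cast hn
  set l : ℝ := 4 * ε / n with hl
  have hlpos : 0 < l := by positivity
  set S : ℕ → Ω → ℝ := fun t ω => ∑ τ ∈ Finset.Icc 1 t, M τ ω with hS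
  set f : ℕ → Ω → ℝ := fun t ω => Real.exp (l * (S t ω - t * μ)) with hf
  have hSmeas : ∀ t, Measurable (S t) := fun t =>
    Finset.measurable_sum _ (fun τ _ => hmeas τ)
  have hball : ∀ᵐ ω ∂P, ∀ τ, M τ ω ∈ Set.Icc (0:ℝ) 1 := ae_all_iff.mpr hbdd
  have hSbd : ∀ᵐ ω ∂P, ∀ t : ℕ, 0 ≤ S t ω ∧ S t ω ≤ t := by
    filter_upwards [hball] with ω hω
    intro t
    constructor
    · exact Finset.sum_nonneg fun τ _ => (hω τ).1
    · calc S t ω ≤ ∑ τ ∈ Finset.Icc 1 t, (1:ℝ) :=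
        Finset.sum_le_sum fun τ _ => (hω τ).2
      _ = t := by simp
  have hfint : ∀ t : ℕ, Integrable (f t) P := by
    intro t
    refine Integrable.mono' (integrable_const (Real.exp (l * (t + t * |μ|))))
      (((hSmeas t).sub_const _).const_mul l).exp.aestronglyMeasurable ?_
    filter_upwards [hSbd] with ω hω
    rw [Real.norm_eq_abs, abs_of_pos (Real.exp_pos _), Real.exp_le_exp]
    have h2 : -(t * μ) ≤ (t:ℝ) * |μ| := by
      rw [← mul_neg]
      exact mul_le_mul_of_nonneg_left (neg_le_abs μ) (Nat.cast_nonneg t)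
    have h1 : S t ω - t * μ ≤ t + t * |μ| := by linarith [(hω t).2]
    exact mul_le_mul_of_nonneg_left h1 hlpos.le
  set 𝒢 : Filtration ℕ m :=
    MeasureTheory.Filtration.natural M (fun t => (hmeas t).stronglyMeasurable) with h𝒢
  have hMadp : ∀ {τ i : ℕ}, τ ≤ i → Measurable[𝒢 i] (M τ) := by
    intro τ i hτi
    have h1 : Measurable[MeasurableSpace.comap (M τ) inferInstance] (M τ) :=
      measurable_iff_comap_le.mpr le_rfl
    refine h1.mono ?_ le_rfl
    exact le_biSup (fun j => MeasurableSpace.comap (M j) inferInstance) hτi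
  have hadp : StronglyAdapted 𝒢 f := by
    intro i
    refine Measurable.stronglyMeasurable ?_
    have hSm : Measurable[𝒢 i] (S i) :=
      Finset.measurable_sum _ (fun τ hτ => hMadp (Finset.mem_Icc.mp hτ).2)
    exact ((hSm.sub_const _).const_mul l).exp
  have hsub : Submartingale f 𝒢 P := by
    refine submartingale_nat hadp hfint ?_
    intro i
    set g : Ω → ℝ := fun ω => Real.exp (l * (M (i+1) ω - μ)) with hg
    have hsplit : f (i+1) = fun ω => f i ω * g ω := by
      funext ω
      simp only [hf, hg, hS, ← Real.exp_add]
      congr 1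
      rw [Finset.sum_Icc_succ_top (by omega : 1 ≤ i + 1)]
      push_cast
      ring
    have hgmeas : Measurable g := (((hmeas (i+1)).sub_const μ).const_mul l).exp
    have hgint : Integrable g P := by
      refine Integrable.mono' (integrable_const (Real.exp (l * (1 + |μ|))))
        hgmeas.aestronglyMeasurable ?_
      filter_upwards [hbdd (i+1)] with ω hω
      rw [Real.norm_eq_abs, abs_of_pos (Real.exp_pos _), Real.exp_le_exp]
      have : M (i+1) ω - μ ≤ 1 + |μ| := by
        have := neg_le_abs μ; linarith [hω.2]
      exact mul_le_mul_of_nonneg_left this hlpos.le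
    have hfgint : Integrable (fun ω => f i ω * g ω) P := by
      rw [← hsplit]; exact hfint (i+1)
    have hpull : P[f (i+1)|𝒢 i] =ᵐ[P] f i * P[g|𝒢 i] := by
      rw [hsplit]
      exact condExp_mul_of_stronglyMeasurable_left (hadp i) hfgint hgint
    have hIndep : Indep (MeasurableSpace.comap (M (i+1)) inferInstance) (𝒢 i) P := by
      have h := ProbabilityTheory.indep_iSup_of_disjoint
        (m := fun j => MeasurableSpace.comap (M j) inferInstance)
        (fun j => (hmeas j).comap_le) hindep.iIndep
        (S := {i+1}) (T := Set.Iic i)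
        (by rw [Set.disjoint_left]; rintro a rfl ha; exact absurd ha (by simp))
      have hsingle : (⨆ j ∈ ({i+1} : Set ℕ), MeasurableSpace.comap (M j)
          (inferInstance : MeasurableSpace ℝ)) = MeasurableSpace.comap (M (i+1)) inferInstance := by
        simp
      have hIic : (⨆ j ∈ Set.Iic i, MeasurableSpace.comap (M j)
          (inferInstance : MeasurableSpace ℝ)) = 𝒢 i := rfl
      rwa [hsingle, hIic] at h
    have hgsm : StronglyMeasurable[MeasurableSpace.comap (M (i+1)) inferInstance] g := by
      refine Measurable.stronglyMeasurable ?_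
      exact (((measurable_iff_comap_le.mpr le_rfl).sub_const μ).const_mul l).exp
    have hcond : P[g|𝒢 i] =ᵐ[P] fun _ => ∫ ω, g ω ∂P :=
      condExp_indep_eq (hmeas (i+1)).comap_le (𝒢.le i) hgsm hIndep
    have hgmean : 1 ≤ ∫ ω, g ω ∂P := by
      have hMint : Integrable (M (i+1)) P := by
        refine Integrable.mono' (integrable_const 1) (hmeas (i+1)).aestronglyMeasurable ?_
        filter_upwards [hbdd (i+1)] with ω hω
        rw [Real.norm_eq_abs, abs_le]; exact ⟨by linarith [hω.1], hω.2⟩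
      have hint2 : Integrable (fun ω => 1 + l * (M (i+1) ω - μ)) P :=
        (integrable_const 1).add ((hMint.sub (integrable_const μ)).const_mul l)
      have hle : ∀ ω, 1 + l * (M (i+1) ω - μ) ≤ g ω := fun ω => by
        have := Real.add_one_le_exp (l * (M (i+1) ω - μ)); simp only [hg]; linarith
      have hsubint : Integrable (fun ω => M (i+1) ω - μ) P := hMint.sub (integrable_const μ)
      calc (1:ℝ) = ∫ ω, (1 + l * (M (i+1) ω - μ)) ∂P := by
            rw [integral_add (integrable_const 1) (hsubint.const_mul l),
              integral_const, integral_const_mul, integral_sub hMint (integrable_const μ),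
              integral_const, hmean]
            simp
      _ ≤ ∫ ω, g ω ∂P := integral_mono hint2 hgint hle
    filter_upwards [hpull, hcond] with ω h1 h2
    rw [h1, Pi.mul_apply, h2]
    calc f i ω = f i ω * 1 := (mul_one _).symm
    _ ≤ f i ω * ∫ ω, g ω ∂P :=
        mul_le_mul_of_nonneg_left hgmean (Real.exp_pos _).le
  -- Doob's maximal inequality
  set c : ℝ := Real.exp (l * ε) with hc
  have hcpos : 0 < c := Real.exp_pos _
  set cnn : NNReal := ⟨c, hcpos.le⟩ with hcnn
  have hmax := maximal_ineq hsub (fun t ω => (Real.exp_pos _).le) (ε := cnn) n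
  set B := {ω | (cnn : ℝ) ≤ (Finset.range (n+1)).sup' Finset.nonempty_range_add_one
      fun k => f k ω} with hB
  have hAB : {ω | ∃ t ∈ Finset.Icc 1 n, ε ≤ S t ω - t * μ} ⊆ B := by
    rintro ω ⟨t, ht, hω⟩
    have htmem : t ∈ Finset.range (n+1) := by
      rw [Finset.mem_range]; have := (Finset.mem_Icc.mp ht).2; omega
    have hft : c ≤ f t ω := by
      rw [hc, hf, Real.exp_le_exp]
      exact mul_le_mul_of_nonneg_left hω hlpos.le
    exact le_trans hft (Finset.le_sup' (fun k => f k ω) htmem)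
  -- bound the expectation of f n
  have hEfn : ∫ ω, f n ω ∂P ≤ Real.exp (n * l ^ 2 / 8) := by
    have hmgf_eq : mgf (∑ τ ∈ Finset.Icc 1 n, M τ) P l = ∫ ω, Real.exp (l * S n ω) ∂P := by
      simp only [mgf, Finset.sum_apply, hS]
    have hMg : ∫ ω, Real.exp (l * S n ω) ∂P ≤ Real.exp (n * (l * μ + l ^ 2 / 8)) := by
      rw [← hmgf_eq, iIndepFun.mgf_sum hindep hmeas (Finset.Icc 1 n)]
      calc ∏ τ ∈ Finset.Icc 1 n, mgf (M τ) P l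
          ≤ ∏ τ ∈ Finset.Icc 1 n, Real.exp (l * μ + l ^ 2 / 8) :=
            Finset.prod_le_prod (fun τ _ => mgf_nonneg)
              (fun τ _ => stmt9_mgf_le P (hmeas τ) (hbdd τ) (hmean τ) l)
      _ = Real.exp (n * (l * μ + l ^ 2 / 8)) := by
          rw [Finset.prod_const, Nat.card_Icc, ← Real.exp_nat_mul]
          simp [mul_comm]
    have heq0 : f n = fun ω => Real.exp (l * S n ω) * Real.exp (-(l * (n * μ))) := by
      funext ω
      show Real.exp (l * (S n ω - n * μ)) = _
      rw [← Real.exp_add]; congr 1; ring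
    have heq : ∫ ω, f n ω ∂P
        = (∫ ω, Real.exp (l * S n ω) ∂P) * Real.exp (-(l * (n * μ))) := by
      rw [heq0, integral_mul_const]
    rw [heq]
    calc (∫ ω, Real.exp (l * S n ω) ∂P) * Real.exp (-(l * (n * μ)))
        ≤ Real.exp (n * (l * μ + l ^ 2 / 8)) * Real.exp (-(l * (n * μ))) :=
          mul_le_mul_of_nonneg_right hMg (Real.exp_pos _).le
    _ = Real.exp (n * l ^ 2 / 8) := by rw [← Real.exp_add]; congr 1; ring
  -- put everything together
  have hsetint : ∫ ω in B, f n ω ∂P ≤ Real.exp (n * l ^ 2 / 8) :=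
    le_trans (setIntegral_le_integral (hfint n)
      (Filter.Eventually.of_forall fun ω => (Real.exp_pos _).le)) hEfn
  have h3 : (cnn : ℝ≥0∞) * P B ≤ ENNReal.ofReal (Real.exp (n * l ^ 2 / 8)) := by
    refine le_trans ?_ (ENNReal.ofReal_le_ofReal hsetint)
    exact hmax
  have hofc : ENNReal.ofReal c = (cnn : ℝ≥0∞) := by
    rw [ENNReal.ofReal_eq_coe_nnreal hcpos.le]
    rfl
  have h4 : P B ≤ ENNReal.ofReal (Real.exp (n * l ^ 2 / 8) / c) := by
    rw [ENNReal.ofReal_div_of_pos hcpos, hofc]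
    rw [ENNReal.le_div_iff_mul_le (Or.inl (by
      simp only [ne_eq, ENNReal.coe_eq_zero]
      exact fun h => hcpos.ne' (congrArg NNReal.toReal h)))
      (Or.inl ENNReal.coe_ne_top), mul_comm]
    exact h3
  have hfinal : Real.exp (n * l ^ 2 / 8) / c = Real.exp (-2 * ε ^ 2 / n) := by
    rw [hc, ← Real.exp_sub]
    congr 1
    rw [hl]
    field_simp
    ring
  calc P {ω | ∃ t ∈ Finset.Icc 1 n, ε ≤ S t ω - t * μ} ≤ P B := measure_mono hAB
  _ ≤ ENNReal.ofReal (Real.exp (-2 * ε ^ 2 / n)) := by rwa [hfinal] at h4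

set_option maxHeartbeats 1000000 in
/-- Time-uniform Hoeffding bound via doubling. If `M_t` are independent
random variables in `[0,1]` with common mean `μ`, then with probability at least `1-δ`,
for all `1 ≤ t ≤ T`, `|μ̂_t - μ| ≤ sqrt(log(2⌈log₂ T⌉/δ)/t)`. -/
theorem stmt9 {Ω : Type*} {m : MeasurableSpace Ω} (P : Measure Ω) [IsProbabilityMeasure P]
    (T : ℕ) (hT : 2 ≤ T)
    (M : ℕ → Ω → ℝ) (hmeas : ∀ t, Measurable (M t))
    (hindep : iIndepFun M P)
    (hbdd : ∀ t, ∀ᵐ ω ∂P, M t ω ∈ Set.Icc (0:ℝ) 1)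
    (μ : ℝ) (hmean : ∀ t, ∫ ω, M t ω ∂P = μ)
    (δ : ℝ) (hδ : δ ∈ Set.Ioo (0:ℝ) 1) :
    P {ω | ∃ t ∈ Finset.Icc 1 T,
        Real.sqrt (Real.log (2 * (Nat.clog 2 T) / δ) / t) <
          |(∑ τ ∈ Finset.Icc 1 t, M τ ω) / t - μ|} ≤ ENNReal.ofReal δ := by
  obtain ⟨hδ0, hδ1⟩ := hδ
  set L := Nat.clog 2 T with hL
  have hL1 : 1 ≤ L := Nat.clog_pos one_lt_two hT
  have hLR : (0:ℝ) < L := by exact_mod_cast hL1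
  set A : ℝ := 2 * (L:ℝ) / δ with hA
  have hA1 : 1 < A := by
    have hLR1 : (1:ℝ) ≤ L := by exact_mod_cast hL1
    rw [hA, lt_div_iff₀ hδ0]; nlinarith
  have hlogA : 0 < Real.log A := Real.log_pos hA1
  set ε : ℕ → ℝ := fun k => Real.sqrt (2^(k-1) * Real.log A) with hε
  have hεpos : ∀ k, 0 < ε k := fun k => Real.sqrt_pos.mpr (by positivity)
  -- the reflected variables for the lower tail
  set M' : ℕ → Ω → ℝ := fun τ ω => 1 - M τ ω with hM'
  have hmeas' : ∀ t, Measurable (M' t) := fun t => measurable_const.sub (hmeas t)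
  have hindep' : iIndepFun M' P :=
    hindep.comp (fun _ => fun x : ℝ => 1 - x) (fun _ => measurable_const.sub measurable_id)
  have hbdd' : ∀ t, ∀ᵐ ω ∂P, M' t ω ∈ Set.Icc (0:ℝ) 1 := by
    intro t; filter_upwards [hbdd t] with ω h
    exact ⟨by simp only [hM']; linarith [h.2], by simp only [hM']; linarith [h.1]⟩
  have hMint : ∀ t, Integrable (M t) P := by
    intro t
    refine Integrable.mono' (integrable_const 1) (hmeas t).aestronglyMeasurable ?_
    filter_upwards [hbdd t] with ω h
    rw [Real.norm_eq_abs, abs_le]; exact ⟨by linarith [h.1], h.2⟩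
  have hmean' : ∀ t, ∫ ω, M' t ω ∂P = 1 - μ := by
    intro t
    have : ∫ ω, (1 - M t ω) ∂P = ∫ _, (1:ℝ) ∂P - ∫ ω, M t ω ∂P :=
      integral_sub (integrable_const 1) (hMint t)
    simp only [hM', this, hmean t, integral_const, measure_univ, ENNReal.toReal_one, probReal_univ, smul_eq_mul,
      one_mul]
  -- the dyadic events
  set Ep : ℕ → Set Ω := fun k =>
    {ω | ∃ t ∈ Finset.Icc 1 (2^k), ε k ≤ (∑ τ ∈ Finset.Icc 1 t, M τ ω) - t * μ} with hEp
  set En : ℕ → Set Ω := fun k =>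
    {ω | ∃ t ∈ Finset.Icc 1 (2^k), ε k ≤ (∑ τ ∈ Finset.Icc 1 t, M' τ ω) - t * (1-μ)} with hEn
  -- value of the exponential bound
  have hexp : ∀ k : ℕ, 1 ≤ k →
      Real.exp (-2 * (ε k) ^ 2 / ((2^k : ℕ) : ℝ)) = δ / (2 * L) := by
    intro k hk
    have h1 : (ε k) ^ 2 = 2^(k-1) * Real.log A := Real.sq_sqrt (by positivity)
    have hk' : k - 1 + 1 = k := Nat.succ_pred_eq_of_pos hk
    have h2 : ((2^k : ℕ) : ℝ) = 2 * 2^(k-1 : ℕ) := by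
      rw [← hk']
      push_cast [pow_succ]
      ring
    rw [h1, h2]
    have h3 : -2 * ((2:ℝ)^(k-1 : ℕ) * Real.log A) / (2 * 2^(k-1 : ℕ)) = -Real.log A := by
      have : (0:ℝ) < 2^(k-1:ℕ) := by positivity
      field_simp
    rw [h3, Real.exp_neg, Real.exp_log (by positivity : (0:ℝ) < A), hA]
    rw [inv_div]
  -- tail bounds on each dyadic event
  have hboundp : ∀ k, 1 ≤ k → P (Ep k) ≤ ENNReal.ofReal (δ / (2 * L)) := by
    intro k hk
    have := stmt9_maximal P M hmeas hindep hbdd μ hmean (2^k)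
      Nat.one_le_two_pow (ε k) (hεpos k)
    rwa [hexp k hk] at this
  have hboundn : ∀ k, 1 ≤ k → P (En k) ≤ ENNReal.ofReal (δ / (2 * L)) := by
    intro k hk
    have := stmt9_maximal P M' hmeas' hindep' hbdd' (1-μ) hmean' (2^k)
      Nat.one_le_two_pow (ε k) (hεpos k)
    rwa [hexp k hk] at this
  -- the inclusion into the dyadic events
  have hsub : {ω | ∃ t ∈ Finset.Icc 1 T,
        Real.sqrt (Real.log A / t) <
          |(∑ τ ∈ Finset.Icc 1 t, M τ ω) / t - μ|}
      ⊆ ⋃ k ∈ Finset.Icc 1 L, (Ep k ∪ En k) := by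
    rintro ω ⟨t, htmem, hω⟩
    obtain ⟨ht1, htT⟩ := Finset.mem_Icc.mp htmem
    set k := max 1 (Nat.clog 2 t) with hk
    have hk1 : 1 ≤ k := le_max_left _ _
    have hkL : k ≤ L := max_le hL1 (Nat.clog_mono_right 2 htT)
    have htle : t ≤ 2^k :=
      le_trans (Nat.le_pow_clog one_lt_two t)
        (Nat.pow_le_pow_right (by norm_num) (le_max_right _ _))
    have hge : 2^(k-1) ≤ t := by
      rcases eq_or_lt_of_le ht1 with h1 | h2
      · have h0 : Nat.clog 2 1 = 0 := Nat.clog_one_right 2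
        simp [hk, ← h1, h0]
      · have hc1 : 1 ≤ Nat.clog 2 t := Nat.clog_pos one_lt_two h2
        have hkeq : k = Nat.clog 2 t := max_eq_right hc1
        rw [hkeq]
        exact le_of_lt (Nat.pow_pred_clog_lt_self one_lt_two h2)
    have htR : (0:ℝ) < t := by exact_mod_cast ht1
    -- turn the averaged inequality into a sum inequality
    have habs : ε k ≤ |(∑ τ ∈ Finset.Icc 1 t, M τ ω) - t * μ| := by
      have h3 : |(∑ τ ∈ Finset.Icc 1 t, M τ ω) / t - μ|
          = |(∑ τ ∈ Finset.Icc 1 t, M τ ω) - t * μ| / t := by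
        rw [show (∑ τ ∈ Finset.Icc 1 t, M τ ω) / (t:ℝ) - μ
            = ((∑ τ ∈ Finset.Icc 1 t, M τ ω) - t * μ) / t from by field_simp,
          abs_div, abs_of_pos htR]
      rw [h3, lt_div_iff₀ htR] at hω
      have h4 : Real.sqrt (Real.log A / t) * t = Real.sqrt ((t:ℝ) * Real.log A) := by
        rw [show (t:ℝ) * Real.log A = (Real.log A / t) * (t:ℝ)^2 from by
          rw [div_mul_eq_mul_div, eq_div_iff htR.ne']; ring]
        rw [Real.sqrt_mul (by positivity : (0:ℝ) ≤ Real.log A / t), Real.sqrt_sq htR.le]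
      have h5 : ε k ≤ Real.sqrt ((t:ℝ) * Real.log A) := by
        refine Real.sqrt_le_sqrt ?_
        refine mul_le_mul_of_nonneg_right ?_ hlogA.le
        exact_mod_cast hge
      calc ε k ≤ Real.sqrt ((t:ℝ) * Real.log A) := h5
      _ = Real.sqrt (Real.log A / t) * t := h4.symm
      _ ≤ |(∑ τ ∈ Finset.Icc 1 t, M τ ω) - t * μ| := by linarith [hω]
    have htmem2 : t ∈ Finset.Icc 1 (2^k) := Finset.mem_Icc.mpr ⟨ht1, htle⟩
    have hkmem : k ∈ Finset.Icc 1 L := Finset.mem_Icc.mpr ⟨hk1, hkL⟩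
    refine Set.mem_biUnion hkmem ?_
    rcases le_or_gt 0 ((∑ τ ∈ Finset.Icc 1 t, M τ ω) - t * μ) with hpos | hneg
    · left
      exact ⟨t, htmem2, by rwa [abs_of_nonneg hpos] at habs⟩
    · right
      refine ⟨t, htmem2, ?_⟩
      have hsum' : (∑ τ ∈ Finset.Icc 1 t, M' τ ω) = t - ∑ τ ∈ Finset.Icc 1 t, M τ ω := by
        simp only [hM', Finset.sum_sub_distrib, Finset.sum_const, Nat.card_Icc]
        simp
      rw [hsum']
      rw [abs_of_neg hneg] at habs
      linarith
  -- finish by the union bound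
  calc P {ω | ∃ t ∈ Finset.Icc 1 T,
        Real.sqrt (Real.log A / t) <
          |(∑ τ ∈ Finset.Icc 1 t, M τ ω) / t - μ|}
      ≤ P (⋃ k ∈ Finset.Icc 1 L, (Ep k ∪ En k)) := measure_mono hsub
  _ ≤ ∑ k ∈ Finset.Icc 1 L, P (Ep k ∪ En k) := measure_biUnion_finset_le _ _
  _ ≤ ∑ k ∈ Finset.Icc 1 L, (ENNReal.ofReal (δ / (2*L)) + ENNReal.ofReal (δ / (2*L))) := by
      refine Finset.sum_le_sum fun k hk => ?_
      have hk1 := (Finset.mem_Icc.mp hk).1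
      exact le_trans (measure_union_le _ _) (add_le_add (hboundp k hk1) (hboundn k hk1))
  _ = ENNReal.ofReal δ := by
      rw [Finset.sum_const, Nat.card_Icc, ← ENNReal.ofReal_add (by positivity) (by positivity)]
      have h6 : δ / (2*(L:ℝ)) + δ / (2*L) = δ / L := by
        field_simp
        ring
      rw [h6, nsmul_eq_mul]
      simp only [Nat.add_sub_cancel]
      rw [← ENNReal.ofReal_natCast L, ← ENNReal.ofReal_mul (Nat.cast_nonneg L)]
      congr 1
      field_simp
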